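/- Let g : ℝᴾ → ℝ be continuous on a compact set K ⊆ ℝᴾ. For every ε > 0 there exist m ∈ ℕ, weights aⱼ ∈ ℝ, ωⱼ ∈ ℝᴾ, bⱼ ∈ ℝ such that sup_{x∈K} |g(x) − Σ_{j=1}^m aⱼ·ReLU(ωⱼ·x + bⱼ)| < ε. -/

import Mathlib

open Finset



/-- Telescoping identity for the piecewise-linear ReLU interpolant. -/
lemma pl_eval (g : ℕ → ℝ) (t : ℕ → ℝ) (h : ℝ) (hh : h ≠ 0)
    (ht : ∀ j, t (j + 1) = t j + h) (s : ℝ) (k : ℕ) :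
    g 0 + ∑ j ∈ range (k + 1),
      (if j = 0 then (g 1 - g 0) / h
        else (g (j+1) - g j) / h - (g j - g (j-1)) / h) * (s - t j)
      = g k + (g (k+1) - g k) / h * (s - t k) := by
  induction k with
  | zero => simp
  | succ k ih =>
    rw [Finset.sum_range_succ, ← add_assoc, ih]
    have h1 : t (k + 1) = t k + h := ht k
    simp only [Nat.succ_ne_zero, if_false, Nat.add_sub_cancel]
    rw [h1]
    field_simp
    ring

/-- 1D approximation of a Lipschitz function on `[-R, R]` by a constant plus a
sum of ReLU units. -/
lemma oneD_relu_approx (f : ℝ → ℝ) (L R δ : ℝ) (hL : 0 ≤ L)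
    (hf : ∀ a b : ℝ, |f a - f b| ≤ L * |a - b|) (hR : 0 < R) (hδ : 0 < δ) :
    ∃ (n : ℕ) (c t : ℕ → ℝ) (C : ℝ), ∀ s ∈ Set.Icc (-R) R,
      |f s - (C + ∑ j ∈ Finset.range n, c j * max (s - t j) 0)| ≤ δ := by
  obtain ⟨n, hn1, hn2⟩ : ∃ n : ℕ, 1 ≤ n ∧ 4 * L * R / δ ≤ n := by
    refine ⟨max 1 ⌈4 * L * R / δ⌉₊, le_max_left _ _, ?_⟩
    exact (Nat.le_ceil _).trans (by exact_mod_cast Nat.cast_le.mpr (le_max_right _ _))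
  have hn0 : (0:ℝ) < n := by exact_mod_cast hn1
  set h : ℝ := 2 * R / n with hh_def
  have hh : 0 < h := by positivity
  set t : ℕ → ℝ := fun j => -R + j * h with ht_def
  have ht : ∀ j, t (j + 1) = t j + h := by
    intro j; simp only [ht_def]; push_cast; ring
  have htmono : ∀ {i j : ℕ}, i ≤ j → t i ≤ t j := by
    intro i j hij
    simp only [ht_def]
    have : (i:ℝ) ≤ j := by exact_mod_cast hij
    nlinarith
  set g : ℕ → ℝ := fun j => f (t j) with hg_def
  set c : ℕ → ℝ := fun j => if j = 0 then (g 1 - g 0) / h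
      else (g (j+1) - g j) / h - (g j - g (j-1)) / h with hc_def
  have hslope : ∀ j, |(g (j+1) - g j) / h| ≤ L := by
    intro j
    have h1 : |f (t (j+1)) - f (t j)| ≤ L * h := by
      rw [ht j]
      have := hf (t j + h) (t j)
      simpa [add_sub_cancel_left, abs_of_pos hh] using this
    rw [abs_div, abs_of_pos hh, div_le_iff₀ hh]
    calc |g (j+1) - g j| = |f (t (j+1)) - f (t j)| := rfl
      _ ≤ L * h := h1
  refine ⟨n, c, t, g 0, ?_⟩
  intro s hs
  have hs0 : (0:ℝ) ≤ (s + R) / h := by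
    have h1 : -R ≤ s := hs.1
    have : (0:ℝ) ≤ s + R := by linarith
    positivity
  set k : ℕ := min (n - 1) ⌊(s + R) / h⌋₊ with hk_def
  have hk_lt : k < n := by
    have : k ≤ n - 1 := min_le_left _ _
    omega
  have htk_le : t k ≤ s := by
    have h1 : (k:ℝ) ≤ (s + R) / h := by
      have h2 : (k:ℝ) ≤ (⌊(s + R) / h⌋₊ : ℝ) := by
        exact_mod_cast Nat.cast_le.mpr (min_le_right _ _)
      exact h2.trans (Nat.floor_le hs0)
    have h3 : (k:ℝ) * h ≤ s + R := by
      rw [div_eq_mul_inv] at h1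
      calc (k:ℝ) * h ≤ ((s + R) * h⁻¹) * h := by nlinarith
        _ = s + R := by field_simp
    simp only [ht_def]; linarith
  have hs_le : s ≤ t (k + 1) := by
    rcases le_or_gt ⌊(s + R) / h⌋₊ (n - 1) with hc1 | hc1
    · have hk_eq : k = ⌊(s + R) / h⌋₊ := min_eq_right hc1
      have h1 : (s + R) / h < (k:ℝ) + 1 := by
        rw [hk_eq]; exact Nat.lt_floor_add_one _
      have h2 : s + R < ((k:ℝ) + 1) * h := by
        rw [div_lt_iff₀ hh] at h1; linarith
      simp only [ht_def]; push_cast; nlinarith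
    · have hk_eq : k = n - 1 := min_eq_left hc1.le
      have hkn : k + 1 = n := by omega
      have htn : t n = R := by
        simp only [ht_def, hh_def]; field_simp; ring
      rw [hkn, htn]; exact hs.2
  -- reduce the full sum to the sum over range (k+1)
  have hsum : ∑ j ∈ Finset.range n, c j * max (s - t j) 0
      = ∑ j ∈ Finset.range (k+1), c j * (s - t j) := by
    rw [← Finset.sum_subset (Finset.range_subset_range.mpr hk_lt)]
    · apply Finset.sum_congr rfl
      intro j hj
      have hjk : j ≤ k := by simpa [Nat.lt_succ_iff] using hj
      have : t j ≤ s := (htmono hjk).trans htk_le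
      rw [max_eq_left (by linarith)]
    · intro j _ hj
      have hjk : k + 1 ≤ j := by simpa [Nat.lt_succ_iff] using hj
      have : s ≤ t j := hs_le.trans (htmono hjk)
      rw [max_eq_right (by linarith), mul_zero]
  rw [hsum]
  have heval := pl_eval g t h (ne_of_gt hh) ht s k
  simp only [hc_def] at heval ⊢
  rw [heval]
  -- error bound
  have hd1 : |f s - g k| ≤ L * h := by
    have := hf s (t k)
    have habs : |s - t k| ≤ h := by
      rw [abs_of_nonneg (by linarith)]
      have := ht k; linarith
    calc |f s - g k| ≤ L * |s - t k| := this
      _ ≤ L * h := by nlinarith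
  have hd2 : |(g (k+1) - g k) / h * (s - t k)| ≤ L * h := by
    rw [abs_mul]
    have h1 := hslope k
    have habs : |s - t k| ≤ h := by
      rw [abs_of_nonneg (by linarith)]
      have := ht k; linarith
    have h2 : (0:ℝ) ≤ |s - t k| := abs_nonneg _
    nlinarith [abs_nonneg ((g (k+1) - g k)/h)]
  have hfinal : 2 * (L * h) ≤ δ := by
    have h1 : 4 * L * R ≤ n * δ := by
      rw [div_le_iff₀ hδ] at hn2; linarith
    have h2 : h * n = 2 * R := by rw [hh_def]; field_simp
    nlinarith [hn0, hh.le]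
  set X : ℝ := (g (k+1) - g k) / h * (s - t k) with hX
  have key : f s - (g k + X) = (f s - g k) - X := by ring
  have tri : |(f s - g k) - X| ≤ |f s - g k| + |X| := by
    simpa [sub_eq_add_neg, abs_neg] using abs_add_le (f s - g k) (-X)
  rw [key]
  linarith




lemma cos_lip : ∀ a b : ℝ, |Real.cos a - Real.cos b| ≤ 1 * |a - b| := by
  intro a b
  rw [Real.cos_sub_cos, one_mul]
  have h1 : |Real.sin ((a + b) / 2)| ≤ 1 := Real.abs_sin_le_one _
  have h2 : |Real.sin ((a - b) / 2)| ≤ |(a - b) / 2| := Real.abs_sin_le_abs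
  have h3 : |(a - b) / 2| = |a - b| / 2 := by rw [abs_div]; norm_num
  calc |(-2) * Real.sin ((a + b) / 2) * Real.sin ((a - b) / 2)|
      = 2 * (|Real.sin ((a + b) / 2)| * |Real.sin ((a - b) / 2)|) := by
        rw [abs_mul, abs_mul]; norm_num; ring
    _ ≤ 2 * (1 * (|a - b| / 2)) := by
        apply mul_le_mul_of_nonneg_left _ (by norm_num)
        apply mul_le_mul h1 (h2.trans_eq h3) (abs_nonneg _) (by norm_num)
    _ = |a - b| := by ring




noncomputable def cosRidge {P : ℕ} (K : Set (Fin P → ℝ)) (ω : Fin P → ℝ) (b : ℝ) : C(K, ℝ) :=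
  ⟨fun x => Real.cos (∑ i, ω i * (x : Fin P → ℝ) i + b), by
    apply Real.continuous_cos.comp
    apply Continuous.add _ continuous_const
    exact continuous_finset_sum _ fun i _ =>
      (continuous_const.mul ((continuous_apply i).comp continuous_subtype_val))⟩

variable {P : ℕ} (K : Set (Fin P → ℝ))

def ridgeSet : Set C(K, ℝ) := {f | ∃ ω b, f = cosRidge K ω b}

lemma one_mem_span : (1 : C(K, ℝ)) ∈ Submodule.span ℝ (ridgeSet K) := by
  apply Submodule.subset_span
  refine ⟨0, 0, ?_⟩
  ext x
  simp [cosRidge]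

lemma mul_ridge (ω₁ ω₂ : Fin P → ℝ) (b₁ b₂ : ℝ) :
    cosRidge K ω₁ b₁ * cosRidge K ω₂ b₂ =
      (1/2 : ℝ) • cosRidge K (ω₁ + ω₂) (b₁ + b₂)
        + (1/2 : ℝ) • cosRidge K (ω₁ - ω₂) (b₁ - b₂) := by
  ext x
  simp only [ContinuousMap.mul_apply, ContinuousMap.add_apply, ContinuousMap.smul_apply,
    smul_eq_mul, cosRidge, ContinuousMap.coe_mk]
  have h1 : ∑ i, (ω₁ + ω₂) i * (x : Fin P → ℝ) i + (b₁ + b₂)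
      = (∑ i, ω₁ i * (x : Fin P → ℝ) i + b₁) + (∑ i, ω₂ i * (x : Fin P → ℝ) i + b₂) := by
    simp only [Pi.add_apply, add_mul, Finset.sum_add_distrib]; ring
  have h2 : ∑ i, (ω₁ - ω₂) i * (x : Fin P → ℝ) i + (b₁ - b₂)
      = (∑ i, ω₁ i * (x : Fin P → ℝ) i + b₁) - (∑ i, ω₂ i * (x : Fin P → ℝ) i + b₂) := by
    simp only [Pi.sub_apply, sub_mul, Finset.sum_sub_distrib]; ring
  have key : ∀ u v : ℝ, Real.cos u * Real.cos v
      = 1/2 * Real.cos (u + v) + 1/2 * Real.cos (u - v) := by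
    intro u v
    rw [Real.cos_add, Real.cos_sub]
    ring
  rw [h1, h2]
  exact key _ _

lemma mul_mem_span : ∀ f g : C(K, ℝ), f ∈ Submodule.span ℝ (ridgeSet K) →
    g ∈ Submodule.span ℝ (ridgeSet K) → f * g ∈ Submodule.span ℝ (ridgeSet K) := by
  intro f g hf hg
  have h1 : f * g ∈ Submodule.span ℝ (ridgeSet K) * Submodule.span ℝ (ridgeSet K) :=
    Submodule.mul_mem_mul hf hg
  rw [Submodule.span_mul_span] at h1
  refine Submodule.span_le.mpr ?_ h1
  rintro fg ⟨f₁, hf₁, f₂, hf₂, rfl⟩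
  obtain ⟨ω₁, b₁, rfl⟩ := hf₁
  obtain ⟨ω₂, b₂, rfl⟩ := hf₂
  have : cosRidge K ω₁ b₁ * cosRidge K ω₂ b₂ ∈ Submodule.span ℝ (ridgeSet K) := by
    rw [mul_ridge]
    exact Submodule.add_mem _
      (Submodule.smul_mem _ _ (Submodule.subset_span ⟨_, _, rfl⟩))
      (Submodule.smul_mem _ _ (Submodule.subset_span ⟨_, _, rfl⟩))
  exact this

noncomputable def ridgeAlg : Subalgebra ℝ C(K, ℝ) :=
  (Submodule.span ℝ (ridgeSet K)).toSubalgebra (one_mem_span K) (mul_mem_span K)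

lemma ridgeAlg_sep : (ridgeAlg K).SeparatesPoints := by
  intro x y hxy
  obtain ⟨i, hi⟩ : ∃ i, (x : Fin P → ℝ) i ≠ (y : Fin P → ℝ) i := by
    by_contra hcon
    push_neg at hcon
    exact hxy (Subtype.ext (funext hcon))
  set a := (x : Fin P → ℝ) i
  set b := (y : Fin P → ℝ) i
  set D := |a| + |b| + 1 with hD_def
  have hD : 0 < D := by positivity
  set τ := Real.pi / (2 * D) with hτ_def
  have hτ : 0 < τ := by
    apply div_pos Real.pi_pos; positivity
  have hfA : cosRidge K (fun j => if j = i then τ else 0) (Real.pi / 2) ∈ ridgeAlg K := by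
    rw [ridgeAlg, Submodule.mem_toSubalgebra]
    exact Submodule.subset_span ⟨_, _, rfl⟩
  refine ⟨_, ⟨_, hfA, rfl⟩, ?_⟩
  have heval : ∀ z : K, cosRidge K (fun j => if j = i then τ else 0) (Real.pi / 2) z
      = Real.cos (τ * (z : Fin P → ℝ) i + Real.pi / 2) := by
    intro z
    simp only [cosRidge, ContinuousMap.coe_mk]
    congr 1
    congr 1
    rw [show ∑ j, (if j = i then τ else 0) * (z : Fin P → ℝ) j
        = ∑ j, if j = i then τ * (z : Fin P → ℝ) j else 0 by
      apply Finset.sum_congr rfl; intro j _; split <;> simp]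
    simp
  simp only []
  rw [heval x, heval y]
  have hτD : τ * D = Real.pi / 2 := by
    rw [hτ_def]; field_simp
  have hmem : ∀ u : ℝ, |u| ≤ D - 1 → τ * u + Real.pi / 2 ∈ Set.Icc 0 Real.pi := by
    intro u hu
    have habs : |τ * u| ≤ Real.pi / 2 := by
      rw [abs_mul, abs_of_pos hτ]
      calc τ * |u| ≤ τ * D := by nlinarith [abs_nonneg u]
        _ = Real.pi / 2 := hτD
    have h1 := neg_abs_le (τ * u)
    have h2 := le_abs_self (τ * u)
    constructor <;> [linarith; linarith]
  have ha : |a| ≤ D - 1 := by rw [hD_def]; have := abs_nonneg b; linarith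
  have hb : |b| ≤ D - 1 := by rw [hD_def]; have := abs_nonneg a; linarith
  intro hcontra
  apply hi
  have heq := Real.injOn_cos (hmem a ha) (hmem b hb) hcontra
  have : τ * a = τ * b := by linarith
  exact mul_left_cancel₀ (ne_of_gt hτ) this


section UA2

variable {P : ℕ} (K : Set (Fin P → ℝ))

/-- `f` can be approximated on `K` by shallow ReLU networks within any `δ > 0`. -/
def ReLUApx (f : C(K, ℝ)) : Prop :=
  ∀ δ > (0:ℝ), ∃ (m : ℕ) (a : ℕ → ℝ) (ω : ℕ → Fin P → ℝ) (b : ℕ → ℝ),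
    ∀ (x : Fin P → ℝ) (hx : x ∈ K),
      |f ⟨x, hx⟩ - ∑ j ∈ Finset.range m, a j * max (∑ i, ω j i * x i + b j) 0| ≤ δ

lemma reLUApx_zero : ReLUApx K 0 := by
  intro δ hδ
  exact ⟨0, 0, 0, 0, fun x hx => by simp [hδ.le]⟩

lemma reLUApx_add {f g : C(K, ℝ)} (hf : ReLUApx K f) (hg : ReLUApx K g) :
    ReLUApx K (f + g) := by
  intro δ hδ
  obtain ⟨m₁, a₁, ω₁, b₁, h₁⟩ := hf (δ/2) (by linarith)
  obtain ⟨m₂, a₂, ω₂, b₂, h₂⟩ := hg (δ/2) (by linarith)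
  refine ⟨m₁ + m₂, fun j => if j < m₁ then a₁ j else a₂ (j - m₁),
    fun j => if j < m₁ then ω₁ j else ω₂ (j - m₁),
    fun j => if j < m₁ then b₁ j else b₂ (j - m₁), fun x hx => ?_⟩
  have hsplit : ∑ j ∈ Finset.range (m₁ + m₂),
      (if j < m₁ then a₁ j else a₂ (j - m₁)) *
        max (∑ i, (if j < m₁ then ω₁ j else ω₂ (j - m₁)) i * x i +
          (if j < m₁ then b₁ j else b₂ (j - m₁))) 0
      = (∑ j ∈ Finset.range m₁, a₁ j * max (∑ i, ω₁ j i * x i + b₁ j) 0)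
        + ∑ j ∈ Finset.range m₂, a₂ j * max (∑ i, ω₂ j i * x i + b₂ j) 0 := by
    rw [Finset.sum_range_add]
    congr 1
    · apply Finset.sum_congr rfl
      intro j hj
      have : j < m₁ := Finset.mem_range.mp hj
      simp [this]
    · apply Finset.sum_congr rfl
      intro j _
      have h1 : ¬ (m₁ + j < m₁) := by omega
      simp [h1]
  rw [hsplit]
  have e1 := h₁ x hx
  have e2 := h₂ x hx
  have : (f + g) (⟨x, hx⟩ : K) = f ⟨x, hx⟩ + g ⟨x, hx⟩ := rfl
  rw [this]
  set S₁ := ∑ j ∈ Finset.range m₁, a₁ j * max (∑ i, ω₁ j i * x i + b₁ j) 0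
  set S₂ := ∑ j ∈ Finset.range m₂, a₂ j * max (∑ i, ω₂ j i * x i + b₂ j) 0
  have tri : |f ⟨x, hx⟩ + g ⟨x, hx⟩ - (S₁ + S₂)|
      ≤ |f ⟨x, hx⟩ - S₁| + |g ⟨x, hx⟩ - S₂| := by
    have := abs_add_le (f ⟨x, hx⟩ - S₁) (g ⟨x, hx⟩ - S₂)
    calc |f ⟨x, hx⟩ + g ⟨x, hx⟩ - (S₁ + S₂)|
        = |(f ⟨x, hx⟩ - S₁) + (g ⟨x, hx⟩ - S₂)| := by ring_nf
      _ ≤ _ := this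
  linarith

lemma reLUApx_smul (c : ℝ) {f : C(K, ℝ)} (hf : ReLUApx K f) :
    ReLUApx K (c • f) := by
  intro δ hδ
  rcases eq_or_ne c 0 with rfl | hc
  · refine ⟨0, 0, 0, 0, fun x hx => by simp [hδ.le]⟩
  · obtain ⟨m, a, ω, b, h⟩ := hf (δ / |c|) (by positivity)
    refine ⟨m, fun j => c * a j, ω, b, fun x hx => ?_⟩
    have h1 := h x hx
    have e : ∑ j ∈ Finset.range m, (c * a j) * max (∑ i, ω j i * x i + b j) 0
        = c * ∑ j ∈ Finset.range m, a j * max (∑ i, ω j i * x i + b j) 0 := by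
      rw [Finset.mul_sum]; apply Finset.sum_congr rfl; intros; ring
    have e2 : (c • f) (⟨x, hx⟩ : K) = c * f ⟨x, hx⟩ := rfl
    rw [e, e2, ← mul_sub, abs_mul]
    calc |c| * |f ⟨x, hx⟩ - ∑ j ∈ Finset.range m, a j * max (∑ i, ω j i * x i + b j) 0|
        ≤ |c| * (δ / |c|) := by
          apply mul_le_mul_of_nonneg_left h1 (abs_nonneg c)
      _ = δ := by field_simp


end UA2

lemma reLUApx_cosRidge {P : ℕ} (K : Set (Fin P → ℝ)) (hK : IsCompact K)
    (ω : Fin P → ℝ) (b : ℝ) : ReLUApx K (cosRidge K ω b) := by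
  intro δ hδ
  have hcont : ContinuousOn (fun x : Fin P → ℝ => ∑ i, ω i * x i + b) K := by
    apply Continuous.continuousOn
    exact (continuous_finset_sum _ fun i _ =>
      continuous_const.mul (continuous_apply i)).add continuous_const
  obtain ⟨C, hC⟩ := hK.exists_bound_of_continuousOn hcont
  set R := max C 1 with hR_def
  have hR : 0 < R := lt_of_lt_of_le one_pos (le_max_right _ _)
  obtain ⟨n, c, t, C0, happrox⟩ :=
    oneD_relu_approx Real.cos 1 R δ one_pos.le cos_lip hR hδ
  refine ⟨n+1, fun j => if j = n then C0 else c j,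
    fun j => if j = n then 0 else ω,
    fun j => if j = n then 1 else b - t j, fun x hx => ?_⟩
  set s := ∑ i, ω i * x i + b with hs_def
  have hs : s ∈ Set.Icc (-R) R := by
    have h1 := hC x hx
    rw [Real.norm_eq_abs] at h1
    have h2 := abs_le.mp (h1.trans (le_max_left C 1))
    exact ⟨h2.1, h2.2⟩
  have hsum : ∑ j ∈ Finset.range (n+1),
      (if j = n then C0 else c j) *
        max (∑ i, (if j = n then (0 : Fin P → ℝ) else ω) i * x i +
          (if j = n then 1 else b - t j)) 0
      = C0 + ∑ j ∈ Finset.range n, c j * max (s - t j) 0 := by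
    rw [Finset.sum_range_succ]
    have hlast : (if n = n then C0 else c n) *
        max (∑ i, (if n = n then (0 : Fin P → ℝ) else ω) i * x i +
          (if n = n then 1 else b - t n)) 0 = C0 := by
      simp
    rw [hlast, add_comm]
    congr 1
    apply Finset.sum_congr rfl
    intro j hj
    have hjn : j ≠ n := by have := Finset.mem_range.mp hj; omega
    simp only [hjn, if_false]
    congr 2
    rw [hs_def]; ring
  rw [hsum]
  have : (cosRidge K ω b) (⟨x, hx⟩ : K) = Real.cos s := rfl
  rw [this]
  exact happrox s hs


/-- Universal approximation by shallow ReLU networks: every function `g`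
continuous on a compact set `K ⊆ ℝᴾ` can be uniformly approximated within any
`ε > 0` by a finite sum `Σⱼ aⱼ ReLU(ωⱼ·x + bⱼ)`. -/
theorem stmt_18 {P : ℕ} (K : Set (Fin P → ℝ)) (hK : IsCompact K)
    (g : (Fin P → ℝ) → ℝ) (hg : ContinuousOn g K) :
    ∀ ε > (0 : ℝ), ∃ (m : ℕ) (a : Fin m → ℝ) (ω : Fin m → Fin P → ℝ) (b : Fin m → ℝ),
      ∀ x ∈ K, |g x - ∑ j, a j * max (∑ i, ω j i * x i + b j) 0| < ε := by
  intro ε hε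
  haveI : CompactSpace K := isCompact_iff_compactSpace.mp hK
  set gR : C(K, ℝ) := ⟨K.restrict g, hg.restrict⟩ with hgR
  obtain ⟨⟨f, hfA⟩, hclose⟩ :=
    ContinuousMap.exists_mem_subalgebra_near_continuousMap_of_separatesPoints
      (ridgeAlg K) (ridgeAlg_sep K) gR (ε/2) (by linarith)
  rw [ridgeAlg, Submodule.mem_toSubalgebra] at hfA
  have hApx : ReLUApx K f := by
    refine Submodule.span_induction (p := fun u _ => ReLUApx K u) ?_ ?_ ?_ ?_ hfA
    · intro v hv
      obtain ⟨ω, b, rfl⟩ := hv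
      exact reLUApx_cosRidge K hK ω b
    · exact reLUApx_zero K
    · intro u v _ _ hu hv
      exact reLUApx_add K hu hv
    · intro c u _ hu
      exact reLUApx_smul K c hu
  obtain ⟨m, a, ω, b, hnet⟩ := hApx (ε/2) (by linarith)
  refine ⟨m, fun j => a j, fun j => ω j, fun j => b j, fun x hx => ?_⟩
  have hfin : ∑ j : Fin m, a (j : ℕ) * max (∑ i, ω (j : ℕ) i * x i + b (j : ℕ)) 0
      = ∑ j ∈ Finset.range m, a j * max (∑ i, ω j i * x i + b j) 0 :=
    Fin.sum_univ_eq_sum_range (fun j => a j * max (∑ i, ω j i * x i + b j) 0) m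
  rw [hfin]
  have h1 := hnet x hx
  have h2 : |f ⟨x, hx⟩ - g x| < ε/2 := by
    have h3 := ContinuousMap.norm_coe_le_norm (f - gR) ⟨x, hx⟩
    have h4 : (f - gR) (⟨x, hx⟩ : K) = f ⟨x, hx⟩ - g x := rfl
    rw [h4, Real.norm_eq_abs] at h3
    exact lt_of_le_of_lt h3 hclose
  set S := ∑ j ∈ Finset.range m, a j * max (∑ i, ω j i * x i + b j) 0
  have tri : |g x - S| ≤ |g x - f ⟨x, hx⟩| + |f ⟨x, hx⟩ - S| := abs_sub_le _ _ _
  have h2' : |g x - f ⟨x, hx⟩| < ε/2 := by rwa [abs_sub_comm] at h2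
  linarith
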